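/- arXiv:0806.3783 — 3 statements merged into one kernel-verified Lean document; each statement's English description precedes it below -/
import Mathlib

section
/- Let D be a dense subspace of a Hilbert space H, let V be a normed space continuously embedded in H in the sense that D ⊆ V with ‖u‖_H ≤ C‖u‖_V for u in D, and let W be a Banach space into which H embeds compactly, i.e., the inclusion H → W is compact. Suppose that for every ε > 0 there exists C_ε > 0 such that ‖u‖_H² ≤ ε ‖u‖_V² + C_ε ‖u‖_W² for all u ∈ D. Then the embedding (D, ‖·‖_V) → H is a compact operator. -/
/-- A compactness estimate implies compactness of the embedding.  Here the dense subspace `D` of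
`H`, equipped with the norm `‖·‖_V`, is modeled by a normed space `V` together with an injective
linear map `e : V →ₗ[ℂ] H` with dense range satisfying `‖e u‖ ≤ C‖u‖`; `W` is a Banach space into
which `H` embeds compactly via the injective map `iW`. -/
theorem compact_embedding_of_compactness_estimate
    {H V W : Type*}
    [NormedAddCommGroup H] [InnerProductSpace ℂ H] [CompleteSpace H]
    [NormedAddCommGroup V] [NormedSpace ℂ V]
    [NormedAddCommGroup W] [NormedSpace ℂ W] [CompleteSpace W]
    (e : V →ₗ[ℂ] H) (he : Function.Injective e) (hdense : Dense (Set.range e))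
    (C : ℝ) (hC : 0 < C) (hCbound : ∀ u : V, ‖e u‖ ≤ C * ‖u‖)
    (iW : H →L[ℂ] W) (hiW : Function.Injective iW) (hiWcpt : IsCompactOperator ⇑iW)
    (hest : ∀ ε > (0 : ℝ), ∃ Cε > (0 : ℝ),
      ∀ u : V, ‖e u‖ ^ 2 ≤ ε * ‖u‖ ^ 2 + Cε * ‖iW (e u)‖ ^ 2) :
    IsCompactOperator ⇑e := by
  rw [isCompactOperator_iff_isCompact_closure_image_ball e one_pos]
  refine TotallyBounded.isCompact_of_isClosed ?_ isClosed_closure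
  refine TotallyBounded.closure ?_
  rw [Metric.totallyBounded_iff]
  intro δ hδ
  obtain ⟨Cε, hCε, hu⟩ := hest (δ ^ 2 / 8) (by positivity)
  set δ' := δ / (2 * Real.sqrt Cε) with hδ'def
  have hδ' : 0 < δ' := by positivity
  have hbdd : Bornology.IsBounded (⇑e '' Metric.ball 0 1) := by
    apply (Metric.isBounded_closedBall (x := (0 : H)) (r := C)).subset
    rintro x ⟨u, hu1, rfl⟩
    simp only [Metric.mem_closedBall, dist_zero_right]
    calc ‖e u‖ ≤ C * ‖u‖ := hCbound u
    _ ≤ C * 1 := by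
        refine mul_le_mul_of_nonneg_left ?_ hC.le
        simpa [dist_zero_right] using (Metric.mem_ball.mp hu1).le
    _ = C := mul_one C
  obtain ⟨K, hK, hKsub⟩ := hiWcpt.image_subset_compact_of_bounded hbdd
  have hT : TotallyBounded (⇑iW '' (⇑e '' Metric.ball 0 1)) :=
    hK.totallyBounded.subset hKsub
  obtain ⟨t, hts, htfin, htcov⟩ :=
    totallyBounded_iff_subset.mp hT _ (Metric.dist_mem_uniformity hδ')
  have hchoice : ∀ y ∈ t, ∃ u : V, u ∈ Metric.ball (0 : V) 1 ∧ iW (e u) = y := by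
    intro y hy
    obtain ⟨x, ⟨u, hu1, rfl⟩, rfl⟩ := hts hy
    exact ⟨u, hu1, rfl⟩
  choose! g hg1 hg2 using hchoice
  refine ⟨(fun y => e (g y)) '' t, htfin.image _, ?_⟩
  rintro x ⟨u, hu1, rfl⟩
  have hmem : iW (e u) ∈ ⋃ y ∈ t, { x | dist x y < δ' } :=
    htcov ⟨e u, ⟨u, hu1, rfl⟩, rfl⟩
  simp only [Set.mem_iUnion, Set.mem_setOf_eq] at hmem
  obtain ⟨y, hyt, hdy⟩ := hmem
  refine Set.mem_iUnion₂.mpr ⟨e (g y), Set.mem_image_of_mem _ hyt, ?_⟩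
  rw [Metric.mem_ball, dist_eq_norm]
  have key : ‖e u - e (g y)‖ ^ 2 ≤ (δ ^ 2 / 8) * ‖u - g y‖ ^ 2
      + Cε * ‖iW (e u) - iW (e (g y))‖ ^ 2 := by
    have h := hu (u - g y)
    rwa [map_sub, map_sub] at h
  have hiWnorm : ‖iW (e u) - iW (e (g y))‖ < δ' := by
    rw [hg2 y hyt]
    rwa [dist_eq_norm] at hdy
  have hnormuv : ‖u - g y‖ ≤ 2 := by
    have h1 : ‖u‖ < 1 := by simpa [dist_zero_right] using Metric.mem_ball.mp hu1
    have h2 : ‖g y‖ < 1 := by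
      simpa [dist_zero_right] using Metric.mem_ball.mp (hg1 y hyt)
    calc ‖u - g y‖ ≤ ‖u‖ + ‖g y‖ := norm_sub_le _ _
    _ ≤ 2 := by linarith
  have hsq : ‖e u - e (g y)‖ ^ 2 < δ ^ 2 := by
    have h1 : (δ ^ 2 / 8) * ‖u - g y‖ ^ 2 ≤ (δ ^ 2 / 8) * 4 := by
      have := pow_le_pow_left₀ (norm_nonneg _) hnormuv 2
      nlinarith [sq_nonneg δ]
    have h2 : Cε * ‖iW (e u) - iW (e (g y))‖ ^ 2 < Cε * δ' ^ 2 := by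
      refine mul_lt_mul_of_pos_left ?_ hCε
      exact pow_lt_pow_left₀ hiWnorm (norm_nonneg _) (by norm_num)
    have h3 : Cε * δ' ^ 2 = δ ^ 2 / 4 := by
      rw [hδ'def, div_pow, mul_pow]
      rw [Real.sq_sqrt hCε.le]
      field_simp
      ring
    nlinarith
  exact lt_of_pow_lt_pow_left₀ 2 hδ.le hsq
end

section
/- Let H₁, H₂, H₃ be Hilbert spaces and S : H₁ → H₂, T : H₂ → H₃ densely defined closed operators with ran(S) = ker(T) closed, and suppose the associated Laplacian □ = T*T + SS* has bounded inverse N. Then N = (S*N)*(S*N) + (T*N')(T*N')*, where N' denotes the inverse Laplacian at the next level, i.e., N can be expressed through the canonical solution operators S*N and T*N'. -/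
open ContinuousLinearMap

/-- Abstract form of `N_q = (∂̄*N_q)*(∂̄*N_q) + (∂̄*N_{q+1})(∂̄*N_{q+1})*`: the Neumann operator
`N` (the bounded inverse of the Laplacian `□ = T*T + SS*`) is expressed through the canonical
solution operators `A = S*N` and `B = T*N'`, where `N'` is the bounded inverse of the Laplacian
`□' = U*U + TT*` one level up in the complex `S, T, U`. -/
theorem neumann_eq_canonical_solution_operators
    {H₁ H₂ H₃ H₄ : Type*}
    [NormedAddCommGroup H₁] [InnerProductSpace ℂ H₁] [CompleteSpace H₁]
    [NormedAddCommGroup H₂] [InnerProductSpace ℂ H₂] [CompleteSpace H₂]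
    [NormedAddCommGroup H₃] [InnerProductSpace ℂ H₃] [CompleteSpace H₃]
    [NormedAddCommGroup H₄] [InnerProductSpace ℂ H₄] [CompleteSpace H₄]
    (S : H₁ →ₗ.[ℂ] H₂) (T : H₂ →ₗ.[ℂ] H₃) (U : H₃ →ₗ.[ℂ] H₄)
    (hSdense : Dense (S.domain : Set H₁)) (hTdense : Dense (T.domain : Set H₂))
    (hUdense : Dense (U.domain : Set H₃))
    (hSclosed : S.IsClosed) (hTclosed : T.IsClosed) (hUclosed : U.IsClosed)
    (hST : LinearMap.range S.toFun = (LinearMap.ker T.toFun).map T.domain.subtype)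
    (hTU : LinearMap.range T.toFun = (LinearMap.ker U.toFun).map U.domain.subtype)
    (hSrange : IsClosed ((LinearMap.range S.toFun : Submodule ℂ H₂) : Set H₂))
    (hTrange : IsClosed ((LinearMap.range T.toFun : Submodule ℂ H₃) : Set H₃))
    (N : H₂ →L[ℂ] H₂) (N' : H₃ →L[ℂ] H₃)
    -- `N` inverts `□ = T*T + SS*`:
    (hN₁ : ∀ u : H₂, N u ∈ T.domain)
    (hN₂ : ∀ u : H₂, N u ∈ S.adjoint.domain)
    (hN₃ : ∀ u : H₂, T ⟨N u, hN₁ u⟩ ∈ T.adjoint.domain)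
    (hN₄ : ∀ u : H₂, S.adjoint ⟨N u, hN₂ u⟩ ∈ S.domain)
    (hNinv : ∀ u : H₂,
      u = T.adjoint ⟨T ⟨N u, hN₁ u⟩, hN₃ u⟩ + S ⟨S.adjoint ⟨N u, hN₂ u⟩, hN₄ u⟩)
    -- `N'` inverts `□' = U*U + TT*`:
    (hN'₁ : ∀ v : H₃, N' v ∈ U.domain)
    (hN'₂ : ∀ v : H₃, N' v ∈ T.adjoint.domain)
    (hN'₃ : ∀ v : H₃, U ⟨N' v, hN'₁ v⟩ ∈ U.adjoint.domain)
    (hN'₄ : ∀ v : H₃, T.adjoint ⟨N' v, hN'₂ v⟩ ∈ T.domain)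
    (hN'inv : ∀ v : H₃,
      v = U.adjoint ⟨U ⟨N' v, hN'₁ v⟩, hN'₃ v⟩ + T ⟨T.adjoint ⟨N' v, hN'₂ v⟩, hN'₄ v⟩)
    -- the canonical solution operators `A = S*N` and `B = T*N'`:
    (A : H₂ →L[ℂ] H₁) (hA : ∀ u : H₂, A u = S.adjoint ⟨N u, hN₂ u⟩)
    (B : H₃ →L[ℂ] H₂) (hB : ∀ v : H₃, B v = T.adjoint ⟨N' v, hN'₂ v⟩) :
    N = (adjoint A) ∘L A + B ∘L (adjoint B) := by
  have hTfa := LinearPMap.adjoint_isFormalAdjoint hTdense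
  have hSfa := LinearPMap.adjoint_isFormalAdjoint hSdense
  have hUfa := LinearPMap.adjoint_isFormalAdjoint hUdense
  -- key fact: `adjoint B u = T (N u)`
  have hBstar : ∀ u : H₂, (adjoint B) u = T ⟨N u, hN₁ u⟩ := by
    intro u
    apply ext_inner_right ℂ
    intro v
    rw [adjoint_inner_left]
    -- ⟪u, B v⟫ = ⟪T (N u), v⟫
    rw [hB v]
    conv_lhs => rw [hNinv u]
    rw [inner_add_left]
    -- second term vanishes: `S (S† N u) ∈ ran S = ker T`
    have h2 : (inner ℂ (S ⟨S.adjoint ⟨N u, hN₂ u⟩, hN₄ u⟩)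
        (T.adjoint ⟨N' v, hN'₂ v⟩) : ℂ) = 0 := by
      have hmem : S ⟨S.adjoint ⟨N u, hN₂ u⟩, hN₄ u⟩ ∈
          (LinearMap.ker T.toFun).map T.domain.subtype := by
        rw [← hST]; exact ⟨_, rfl⟩
      obtain ⟨w, hw, hweq⟩ := hmem
      rw [← hweq]
      have := hTfa ⟨N' v, hN'₂ v⟩ ⟨w, w.2⟩
      rw [← inner_conj_symm]
      simp only [Submodule.coe_subtype]
      rw [this]
      have hw0 : T ⟨(w : H₂), w.2⟩ = 0 := by
        have : T.toFun w = 0 := hw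
        simpa using this
      rw [hw0, inner_zero_right, map_zero]
    rw [h2, add_zero]
    -- first term: ⟪T† (T N u), T† N' v⟫ = ⟪T N u, T (T† N' v)⟫
    have h1 := hTfa ⟨T ⟨N u, hN₁ u⟩, hN₃ u⟩ ⟨T.adjoint ⟨N' v, hN'₂ v⟩, hN'₄ v⟩
    rw [h1]
    -- now use `T (T† N' v) = v - U† (U N' v)`
    have h3 : T ⟨T.adjoint ⟨N' v, hN'₂ v⟩, hN'₄ v⟩
        = v - U.adjoint ⟨U ⟨N' v, hN'₁ v⟩, hN'₃ v⟩ := by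
      rw [eq_sub_iff_add_eq, add_comm]; exact (hN'inv v).symm
    rw [h3, inner_sub_right]
    -- ⟪T N u, U† (U N' v)⟫ = 0 since `T N u ∈ ran T = ker U`
    have h4 : (inner ℂ (T ⟨N u, hN₁ u⟩ : H₃)
        (U.adjoint ⟨U ⟨N' v, hN'₁ v⟩, hN'₃ v⟩) : ℂ) = 0 := by
      have hmem : T ⟨N u, hN₁ u⟩ ∈ (LinearMap.ker U.toFun).map U.domain.subtype := by
        rw [← hTU]; exact ⟨_, rfl⟩
      obtain ⟨w, hw, hweq⟩ := hmem
      rw [← hweq]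
      have := hUfa ⟨U ⟨N' v, hN'₁ v⟩, hN'₃ v⟩ ⟨w, w.2⟩
      rw [← inner_conj_symm]
      simp only [Submodule.coe_subtype]
      rw [this]
      have hw0 : U ⟨(w : H₃), w.2⟩ = 0 := by
        have : U.toFun w = 0 := hw
        simpa using this
      rw [hw0, inner_zero_right, map_zero]
    rw [h4, sub_zero]
  -- main computation
  ext u
  apply ext_inner_right ℂ
  intro v
  simp only [ContinuousLinearMap.add_apply, ContinuousLinearMap.coe_comp',
    Function.comp_apply, inner_add_left, adjoint_inner_left]
  rw [← adjoint_inner_right B ((adjoint B) u) v, hBstar u, hBstar v, hA u, hA v]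
  conv_lhs => rw [hNinv v]
  rw [inner_add_right]
  -- ⟪N u, T† (T N v)⟫ = ⟪T N u, T N v⟫
  have e1 : (inner ℂ (N u) (T.adjoint ⟨T ⟨N v, hN₁ v⟩, hN₃ v⟩) : ℂ)
      = inner ℂ (T ⟨N u, hN₁ u⟩ : H₃) (T ⟨N v, hN₁ v⟩ : H₃) := by
    have := hTfa ⟨T ⟨N v, hN₁ v⟩, hN₃ v⟩ ⟨N u, hN₁ u⟩
    rw [← inner_conj_symm, this, inner_conj_symm]
  -- ⟪N u, S (S† N v)⟫ = ⟪S† N u, S† N v⟫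
  have e2 : (inner ℂ (N u) (S ⟨S.adjoint ⟨N v, hN₂ v⟩, hN₄ v⟩) : ℂ)
      = inner ℂ (S.adjoint ⟨N u, hN₂ u⟩ : H₁) (S.adjoint ⟨N v, hN₂ v⟩ : H₁) := by
    exact (hSfa ⟨N u, hN₂ u⟩ ⟨S.adjoint ⟨N v, hN₂ v⟩, hN₄ v⟩).symm
  rw [e1, e2]
  ring
end

section
/- Let K ⊆ ℂ be compact and π : K × S¹ → ℂ the projection onto the first factor, viewing E = K × S¹ ⊆ ℂ². If K satisfies property (P) in ℂ, then E satisfies property (P) in ℂ². -/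
open Complex

/-- The Levi form (complex Hessian quadratic form) of a real-valued function `f` on a complex
normed space, at the point `z` in the direction `w`:
`Σ (∂²f/∂z_j∂z̄_k)(z) w_j w̄_k = (1/4)(D²f(z)(w,w) + D²f(z)(iw,iw))`,
where `D²` is the real second Fréchet derivative. -/
noncomputable def leviForm {X : Type*} [NormedAddCommGroup X] [NormedSpace ℂ X]
    (f : X → ℝ) (z w : X) : ℝ :=
  (1 / 4) * (iteratedFDeriv ℝ 2 f z ![w, w] + iteratedFDeriv ℝ 2 f z ![I • w, I • w])

/-- Catlin's property (P) for a compact set `E` in a complex normed space: for every `M > 0`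
there is a `C²` function `λ`, plurisubharmonic on a neighborhood `U` of `E` and with values in
`[0,1]` there, whose complex Hessian has all eigenvalues at least `M` at every point of `E`. -/
def PropertyP {X : Type*} [NormedAddCommGroup X] [NormedSpace ℂ X] (E : Set X) : Prop :=
  ∀ M > (0 : ℝ), ∃ (U : Set X) (f : X → ℝ),
    IsOpen U ∧ E ⊆ U ∧ ContDiff ℝ 2 f ∧
    (∀ z ∈ U, f z ∈ Set.Icc (0 : ℝ) 1) ∧
    (∀ z ∈ U, ∀ w : X, 0 ≤ leviForm f z w) ∧
    (∀ z ∈ E, ∀ w : X, M * ‖w‖ ^ 2 ≤ leviForm f z w)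

section Aux

/-- Second derivative of the square of a continuous linear functional. -/
lemma iteratedFDeriv_two_clm_sq {Y : Type*} [NormedAddCommGroup Y] [NormedSpace ℝ Y]
    (φ : Y →L[ℝ] ℝ) (x u : Y) :
    iteratedFDeriv ℝ 2 (fun y => φ y ^ 2) x ![u, u] = 2 * φ u ^ 2 := by
  have h1 : ∀ y : Y, fderiv ℝ (fun y => φ y ^ 2) y = (((2 : ℝ) • φ).smulRight φ) y := by
    intro y
    have hsq : (fun y : Y => φ y ^ 2) = fun y => φ y * φ y := funext fun y => by ring
    have h := ((φ.hasFDerivAt (x := y)).mul (φ.hasFDerivAt (x := y))).fderiv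
    rw [hsq, show (fun y : Y => φ y * φ y) = ⇑φ * ⇑φ from rfl, h]
    ext v
    simp [two_smul]
    ring
  rw [iteratedFDeriv_two_apply, funext h1, ContinuousLinearMap.fderiv]
  simp [Matrix.cons_val_zero, Matrix.cons_val_one]
  ring

variable {X Y : Type*} [NormedAddCommGroup X] [NormedSpace ℂ X]
  [NormedAddCommGroup Y] [NormedSpace ℂ Y]

lemma leviForm_add (f g : X → ℝ) (hf : ContDiff ℝ 2 f) (hg : ContDiff ℝ 2 g) (z w : X) :
    leviForm (fun x => f x + g x) z w = leviForm f z w + leviForm g z w := by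
  simp only [leviForm, iteratedFDeriv_add_apply' (hf.contDiffAt (x := z)) (hg.contDiffAt (x := z)), ContinuousMultilinearMap.add_apply]
  ring

lemma leviForm_const_mul (c : ℝ) (f : X → ℝ) (hf : ContDiff ℝ 2 f) (z w : X) :
    leviForm (fun x => c * f x) z w = c * leviForm f z w := by
  have h := fun (x : X) (m : Fin 2 → X) =>
    congrFun (congrArg DFunLike.coe (iteratedFDeriv_const_smul_apply (a := c) (x := x) hf.contDiffAt)) m
  simp only [leviForm]
  simp only [Pi.smul_apply, smul_eq_mul] at h ⊢
  rw [show (fun x => c * f x) = c • f from rfl, h, h]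
  simp only [ContinuousMultilinearMap.smul_apply, smul_eq_mul]
  ring

lemma leviForm_const (c : ℝ) (z w : X) :
    leviForm (fun _ : X => c) z w = 0 := by
  simp [leviForm, iteratedFDeriv_const_of_ne (two_ne_zero) c]

lemma leviForm_comp_clm (g : Y →L[ℂ] X) (f : X → ℝ) (hf : ContDiff ℝ 2 f) (y w : Y) :
    leviForm (fun x => f (g x)) y w = leviForm f (g y) (g w) := by
  have key : ∀ m : Fin 2 → Y,
      iteratedFDeriv ℝ 2 (fun x => f (g x)) y m = iteratedFDeriv ℝ 2 f (g y) (g ∘ m) := by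
    intro m
    have h := (g.restrictScalars ℝ).iteratedFDeriv_comp_right hf y (i := 2) le_rfl
    have h2 : (fun x => f (g x)) = f ∘ (g.restrictScalars ℝ) := rfl
    rw [h2, h, ContinuousMultilinearMap.compContinuousLinearMap_apply]
    rfl
  have e1 : (g ∘ ![w, w]) = ![g w, g w] := by
    funext i; fin_cases i <;> rfl
  have e2 : (g ∘ ![I • w, I • w]) = ![I • g w, I • g w] := by
    funext i; fin_cases i <;> simp
  rw [leviForm, key, key, e1, e2, leviForm]

lemma leviForm_normSq (z v : ℂ) :
    leviForm (fun w : ℂ => ‖w‖ ^ 2) z v = ‖v‖ ^ 2 := by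
  have hfun : (fun w : ℂ => ‖w‖ ^ 2)
      = fun w : ℂ => (reCLM w) ^ 2 + (imCLM w) ^ 2 := by
    funext w
    rw [Complex.sq_norm, Complex.normSq_apply]
    simp only [Complex.reCLM_apply, Complex.imCLM_apply]
    ring
  have hre : ContDiff ℝ 2 (fun w : ℂ => (reCLM w) ^ 2) :=
    (reCLM.contDiff).pow 2
  have him : ContDiff ℝ 2 (fun w : ℂ => (imCLM w) ^ 2) :=
    (imCLM.contDiff).pow 2
  have key : ∀ u : ℂ, iteratedFDeriv ℝ 2 (fun w : ℂ => ‖w‖ ^ 2) z ![u, u]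
      = 2 * u.re ^ 2 + 2 * u.im ^ 2 := by
    intro u
    rw [hfun, iteratedFDeriv_add_apply' (hre.contDiffAt (x := z)) (him.contDiffAt (x := z)), ContinuousMultilinearMap.add_apply,
      iteratedFDeriv_two_clm_sq reCLM, iteratedFDeriv_two_clm_sq imCLM]
    simp
  have hIre : (I • v).re = -v.im := by simp [Complex.smul_re]
  have hIim : (I • v).im = v.re := by simp [Complex.smul_im]
  rw [leviForm, key, key, hIre, hIim]
  have : ‖v‖ ^ 2 = v.re ^ 2 + v.im ^ 2 := by
    rw [Complex.sq_norm, Complex.normSq_apply]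
    ring
  rw [this]; ring

end Aux

/-- If the compact set `K ⊆ ℂ` satisfies property (P), then `E = K × S¹ ⊆ ℂ²` satisfies
property (P). -/
theorem propertyP_prod_circle (K : Set ℂ) (hK : IsCompact K) (hKP : PropertyP K) :
    PropertyP {p : ℂ × ℂ | p.1 ∈ K ∧ ‖p.2‖ = 1} := by
  intro M hM
  obtain ⟨U₀, f₀, hU₀open, hKU₀, hf₀, hf₀01, hf₀psh, hf₀E⟩ := hKP (2 * M) (by linarith)
  set V : Set ℂ := {w : ℂ | |‖w‖ ^ 2 - 1| < 1 / (4 * M)} with hV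
  have hnsq : ContDiff ℝ 2 (fun w : ℂ => ‖w‖ ^ 2) := contDiff_norm_sq (𝕜 := ℝ)
  have hA : ContDiff ℝ 2 (fun p : ℂ × ℂ => f₀ p.1) := hf₀.comp contDiff_fst
  have hA' : ContDiff ℝ 2 (fun p : ℂ × ℂ => (1 / 2 : ℝ) * f₀ p.1) := hA.const_smul (1 / 2 : ℝ)
  have hBsq : ContDiff ℝ 2 (fun p : ℂ × ℂ => ‖p.2‖ ^ 2) := hnsq.comp contDiff_snd
  have hB : ContDiff ℝ 2 (fun p : ℂ × ℂ => M * ‖p.2‖ ^ 2) := hBsq.const_smul M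
  have hB' : ContDiff ℝ 2 (fun p : ℂ × ℂ => M * ‖p.2‖ ^ 2 + (1 / 4 - M)) :=
    hB.add contDiff_const
  have hlevi : ∀ (p : ℂ × ℂ) (u : ℂ × ℂ),
      leviForm (fun p : ℂ × ℂ => (1 / 2) * f₀ p.1 + (M * ‖p.2‖ ^ 2 + (1 / 4 - M))) p u
        = (1 / 2) * leviForm f₀ p.1 u.1 + M * ‖u.2‖ ^ 2 := by
    intro p u
    rw [leviForm_add _ _ hA' hB', leviForm_add _ _ hB contDiff_const,
      leviForm_const, leviForm_const_mul (1 / 2) (fun p : ℂ × ℂ => f₀ p.1) hA,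
      leviForm_const_mul M (fun p : ℂ × ℂ => ‖p.2‖ ^ 2) hBsq]
    have e1 : leviForm (fun p : ℂ × ℂ => f₀ p.1) p u = leviForm f₀ p.1 u.1 :=
      leviForm_comp_clm (ContinuousLinearMap.fst ℂ ℂ ℂ) f₀ hf₀ p u
    have e2 : leviForm (fun p : ℂ × ℂ => ‖p.2‖ ^ 2) p u = ‖u.2‖ ^ 2 := by
      have h := leviForm_comp_clm (ContinuousLinearMap.snd ℂ ℂ ℂ) (fun w : ℂ => ‖w‖ ^ 2) hnsq p u
      rw [leviForm_normSq] at h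
      exact h
    rw [e1, e2]; ring
  refine ⟨U₀ ×ˢ V, fun p => (1 / 2) * f₀ p.1 + (M * ‖p.2‖ ^ 2 + (1 / 4 - M)), ?_, ?_, ?_, ?_, ?_, ?_⟩
  · exact hU₀open.prod (isOpen_lt (by fun_prop) continuous_const)
  · rintro ⟨z, w⟩ ⟨hz, hw⟩
    refine ⟨hKU₀ hz, ?_⟩
    simp only [hV, Set.mem_setOf_eq, hw]
    simp only [one_pow, sub_self, abs_zero]
    positivity
  · exact hA'.add hB'
  · rintro ⟨z, w⟩ ⟨hz, hw⟩
    have h01 := hf₀01 z hz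
    have hwv : |‖w‖ ^ 2 - 1| < 1 / (4 * M) := hw
    rw [abs_lt] at hwv
    have hM4 : M * (1 / (4 * M)) = 1 / 4 := by field_simp
    constructor
    · nlinarith [h01.1, hwv.1]
    · nlinarith [h01.2, hwv.2]
  · rintro ⟨z, w⟩ ⟨hz, _⟩ u
    rw [hlevi]
    have h := hf₀psh z hz u.1
    nlinarith [sq_nonneg ‖u.2‖]
  · rintro ⟨z, w⟩ ⟨hz, _⟩ u
    rw [hlevi]
    have h1 := hf₀E z hz u.1
    have hn : ‖u‖ = max ‖u.1‖ ‖u.2‖ := rfl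
    have h2 : ‖u‖ ^ 2 ≤ ‖u.1‖ ^ 2 + ‖u.2‖ ^ 2 := by
      rw [hn]
      rcases max_cases ‖u.1‖ ‖u.2‖ with ⟨h, _⟩ | ⟨h, _⟩ <;> rw [h] <;>
        nlinarith [sq_nonneg ‖u.1‖, sq_nonneg ‖u.2‖]
    nlinarith [sq_nonneg ‖u.1‖, sq_nonneg ‖u.2‖]
end
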